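/- For m = 8r with r ≥ 5 odd, the sequence of differences 3, 6, 10, 14, ..., 8r−6, 8r−2, 4r, 4, 1, 8, 12, 16, ..., 4r−4, 4r+8, 4r+12, ..., 8r−8, 8r−4, 4r+4 is a list of 4r values whose absolute values are pairwise distinct, whose total sum equals 8r ( = m), and all of whose partial sums are pairwise distinct modulo 16r. -/

import Mathlib

set_option maxHeartbeats 1000000

/-- Closed form for the signed differences of stmt6. -/
def stmt6D (r a : ℕ) : ℤ :=
  if a = 0 then -3
  else if a < 2*r then (if a % 2 = 1 then 4*(a:ℤ)+2 else -(4*(a:ℤ)+2))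
  else if a = 2*r then 4*(r:ℤ)
  else if a = 2*r+1 then -4
  else if a = 2*r+2 then 1
  else if a = 4*r-1 then 4*(r:ℤ)+4
  else if a % 2 = 1 then (if a ≤ 3*r then 4*(a:ℤ)-8*(r:ℤ)-4 else 4*(a:ℤ)-8*(r:ℤ)+4)
  else (if a ≤ 3*r then -(4*(a:ℤ)-8*(r:ℤ)-4) else -(4*(a:ℤ)-8*(r:ℤ)+4))

/-- Closed form for the partial sums of stmt6. -/
def stmt6F (r a : ℕ) : ℤ :=
  if a = 0 then 0
  else if a ≤ 2*r then (if a % 2 = 1 then -(2*(a:ℤ)+1) else 2*(a:ℤ)-1)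
  else if a = 2*r+1 then 8*(r:ℤ)-1
  else if a = 2*r+2 then 8*(r:ℤ)-5
  else if a = 4*r then 8*(r:ℤ)
  else if a % 2 = 0 then 2*(a:ℤ)+4*(r:ℤ)-4
  else if a ≤ 3*r then 12*(r:ℤ)+2-2*(a:ℤ)
  else 12*(r:ℤ)-6-2*(a:ℤ)

section evals
variable {r a : ℕ}

lemma stmt6F0 : stmt6F r 0 = 0 := by simp [stmt6F]

lemma stmt6Fmid (h1 : 1 ≤ a) (h2 : a ≤ 2*r) :
    stmt6F r a = (if a % 2 = 1 then -(2*(a:ℤ)+1) else 2*(a:ℤ)-1) := by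
  simp only [stmt6F]; rw [if_neg (by omega), if_pos h2]

lemma stmt6F2r1 (hr : 1 ≤ r) : stmt6F r (2*r+1) = 8*(r:ℤ)-1 := by
  simp only [stmt6F]; rw [if_neg (by omega), if_neg (by omega), if_pos (by trivial)]

lemma stmt6F2r2 (hr : 1 ≤ r) : stmt6F r (2*r+2) = 8*(r:ℤ)-5 := by
  simp only [stmt6F]
  rw [if_neg (by omega), if_neg (by omega), if_neg (by omega), if_pos (by trivial)]

lemma stmt6F4r (hr : 5 ≤ r) : stmt6F r (4*r) = 8*(r:ℤ) := by
  simp only [stmt6F]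
  rw [if_neg (by omega), if_neg (by omega), if_neg (by omega), if_neg (by omega),
    if_pos (by trivial)]

lemma stmt6Ftail (hr : 5 ≤ r) (h1 : 2*r+3 ≤ a) (h2 : a ≤ 4*r-1) :
    stmt6F r a = (if a % 2 = 0 then 2*(a:ℤ)+4*(r:ℤ)-4
      else if a ≤ 3*r then 12*(r:ℤ)+2-2*(a:ℤ) else 12*(r:ℤ)-6-2*(a:ℤ)) := by
  simp only [stmt6F]
  rw [if_neg (by omega), if_neg (by omega), if_neg (by omega), if_neg (by omega),
    if_neg (by omega)]

lemma stmt6D0 : stmt6D r 0 = -3 := by simp [stmt6D]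

lemma stmt6Dmid (h1 : 1 ≤ a) (h2 : a < 2*r) :
    stmt6D r a = (if a % 2 = 1 then 4*(a:ℤ)+2 else -(4*(a:ℤ)+2)) := by
  simp only [stmt6D]; rw [if_neg (by omega), if_pos h2]

lemma stmt6D2r (hr : 1 ≤ r) : stmt6D r (2*r) = 4*(r:ℤ) := by
  simp only [stmt6D]; rw [if_neg (by omega), if_neg (by omega), if_pos (by trivial)]

lemma stmt6D2r1 (hr : 1 ≤ r) : stmt6D r (2*r+1) = -4 := by
  simp only [stmt6D]
  rw [if_neg (by omega), if_neg (by omega), if_neg (by omega), if_pos (by trivial)]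

lemma stmt6D2r2 (hr : 1 ≤ r) : stmt6D r (2*r+2) = 1 := by
  simp only [stmt6D]
  rw [if_neg (by omega), if_neg (by omega), if_neg (by omega), if_neg (by omega),
    if_pos (by trivial)]

lemma stmt6D4r1 (hr : 5 ≤ r) : stmt6D r (4*r-1) = 4*(r:ℤ)+4 := by
  simp only [stmt6D]
  rw [if_neg (by omega), if_neg (by omega), if_neg (by omega), if_neg (by omega),
    if_neg (by omega), if_pos (by trivial)]

lemma stmt6Dtail (hr : 5 ≤ r) (h1 : 2*r+3 ≤ a) (h2 : a ≤ 4*r-2) :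
    stmt6D r a = (if a % 2 = 1
      then (if a ≤ 3*r then 4*(a:ℤ)-8*(r:ℤ)-4 else 4*(a:ℤ)-8*(r:ℤ)+4)
      else (if a ≤ 3*r then -(4*(a:ℤ)-8*(r:ℤ)-4) else -(4*(a:ℤ)-8*(r:ℤ)+4))) := by
  simp only [stmt6D]
  rw [if_neg (by omega), if_neg (by omega), if_neg (by omega), if_neg (by omega),
    if_neg (by omega), if_neg (by omega)]

end evals

def stmt6A (r a : ℕ) : ℕ :=
  if a = 0 then 3
  else if a < 2*r then 4*a+2
  else if a = 2*r then 4*r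
  else if a = 2*r+1 then 4
  else if a = 2*r+2 then 1
  else if a = 4*r-1 then 4*r+4
  else if a ≤ 3*r then 4*a-8*r-4
  else 4*a-8*r+4

lemma stmt6DnatAbs (r : ℕ) (hr : 5 ≤ r) (a : ℕ) (ha : a < 4*r) :
    (stmt6D r a).natAbs = stmt6A r a := by
  simp only [stmt6D, stmt6A]
  split_ifs <;> omega

lemma stmt6Ainj (r : ℕ) (hr : 5 ≤ r) (i j : ℕ) (hij : i < j) (hj : j < 4*r) :
    stmt6A r i ≠ stmt6A r j := by
  simp only [stmt6A]
  split_ifs <;> omega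

lemma stmt6Fstep (r : ℕ) (hr : 5 ≤ r) (hro : r % 2 = 1) (a : ℕ) (ha : a < 4*r) :
    stmt6F r (a+1) = stmt6F r a + stmt6D r a := by
  have hcase : a = 0 ∨ (1 ≤ a ∧ a < 2*r) ∨ a = 2*r ∨ a = 2*r+1 ∨ a = 2*r+2 ∨
      (2*r+3 ≤ a ∧ a ≤ 4*r-2) ∨ a = 4*r-1 := by omega
  rcases hcase with h | ⟨h1, h2⟩ | h | h | h | ⟨h1, h2⟩ | h
  · subst h
    rw [stmt6F0, stmt6D0, show (0:ℕ)+1 = 1 from rfl, stmt6Fmid le_rfl (by omega)]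
    norm_num
  · rw [stmt6Fmid (by omega) (by omega), stmt6Fmid h1 (by omega),
      stmt6Dmid h1 h2]
    split_ifs <;> omega
  · subst h
    rw [stmt6F2r1 (by omega), stmt6Fmid (by omega) le_rfl, stmt6D2r (by omega)]
    split_ifs <;> omega
  · subst h
    rw [show 2*r+1+1 = 2*r+2 from rfl, stmt6F2r2 (by omega), stmt6F2r1 (by omega),
      stmt6D2r1 (by omega)]
    ring
  · subst h
    rw [show 2*r+2+1 = 2*r+3 from rfl, stmt6Ftail hr (by omega) (by omega),
      stmt6F2r2 (by omega), stmt6D2r2 (by omega)]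
    split_ifs <;> omega
  · rw [stmt6Ftail hr (by omega) (by omega), stmt6Ftail hr h1 (by omega),
      stmt6Dtail hr h1 h2]
    split_ifs <;> omega
  · subst h
    rw [show 4*r-1+1 = 4*r by omega, stmt6F4r hr, stmt6Ftail hr (by omega) le_rfl,
      stmt6D4r1 hr]
    split_ifs <;> omega

lemma stmt6Finj (r : ℕ) (hr : 5 ≤ r) (hro : r % 2 = 1) (a b : ℕ)
    (ha : a ≤ 4*r) (hb : b ≤ 4*r) (hab : a < b) : stmt6F r a ≠ stmt6F r b := by
  simp only [stmt6F]
  split_ifs <;> omega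

lemma stmt6Fbound (r : ℕ) (hr : 5 ≤ r) (hro : r % 2 = 1) (a : ℕ) (ha : a ≤ 4*r) :
    -(4*(r:ℤ)) < stmt6F r a ∧ stmt6F r a < 12*(r:ℤ) := by
  simp only [stmt6F]
  split_ifs <;> omega

/-- For `m = 8r` with `r ≥ 5` odd, the signed difference sequence along the half-path `P`
of Lemma 3.1 (with unsigned lengths `3, 6, 10, …, 8r-2, 4r, 4, 1, 8, 12, …, 4r-4,
4r+8, …, 8r-4, 4r+4`) consists of `4r` values with pairwise distinct absolute values,
total sum `8r = m`, and pairwise distinct partial sums modulo `16r`. -/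
theorem stmt6 (r : ℕ) (hr : 5 ≤ r) (hodd : Odd r) (d : ℕ → ℤ)
    (hd : ∀ i : ℕ, i < 4 * r → d i =
      if i = 0 then -3
      else if i < 2 * r then (-1) ^ (i + 1) * ((4 * i + 2 : ℕ) : ℤ)
      else if i = 2 * r then ((4 * r : ℕ) : ℤ)
      else if i = 2 * r + 1 then -4
      else if i = 2 * r + 2 then 1
      else if i = 4 * r - 1 then ((4 * r + 4 : ℕ) : ℤ)
      else (-1) ^ (i - (2 * r + 3)) *
        (if i - (2 * r + 3) ≤ r - 3 then ((4 * (i - (2 * r + 3)) + 8 : ℕ) : ℤ)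
         else ((4 * (i - (2 * r + 3)) + 16 : ℕ) : ℤ))) :
    (∀ i j, i < j → j < 4 * r → (d i).natAbs ≠ (d j).natAbs) ∧
    (∑ i ∈ Finset.range (4 * r), d i = (8 * r : ℕ)) ∧
    (∀ a b, a < b → b ≤ 4 * r →
      ¬ Int.ModEq ((16 * r : ℕ) : ℤ)
        (∑ i ∈ Finset.range a, d i) (∑ i ∈ Finset.range b, d i)) := by
  have hro : r % 2 = 1 := Nat.odd_iff.mp hodd
  -- d agrees with the closed form stmt6D
  have hd' : ∀ a, a < 4*r → d a = stmt6D r a := by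
    intro a ha
    rw [hd a ha]
    have hcase : a = 0 ∨ (1 ≤ a ∧ a < 2*r) ∨ a = 2*r ∨ a = 2*r+1 ∨ a = 2*r+2 ∨
        (2*r+3 ≤ a ∧ a ≤ 4*r-2) ∨ a = 4*r-1 := by omega
    rcases hcase with h | ⟨h1, h2⟩ | h | h | h | ⟨h1, h2⟩ | h
    · subst h; rw [if_pos (by trivial), stmt6D0]
    · rw [if_neg (by omega), if_pos h2, stmt6Dmid h1 h2]
      rcases Nat.even_or_odd a with he | ho
      · have hpow : ((-1 : ℤ))^(a+1) = -1 := Odd.neg_one_pow (by simpa using he.add_one)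
        have hm : ¬ a % 2 = 1 := by have := Nat.even_iff.mp he; omega
        rw [hpow, if_neg hm]
        push_cast; ring
      · have hpow : ((-1 : ℤ))^(a+1) = 1 := Even.neg_one_pow ho.add_one
        rw [hpow, if_pos (Nat.odd_iff.mp ho)]
        push_cast; ring
    · subst h
      rw [if_neg (by omega), if_neg (by omega), if_pos (by trivial), stmt6D2r (by omega)]
      push_cast; ring
    · subst h
      rw [if_neg (by omega), if_neg (by omega), if_neg (by omega), if_pos (by trivial),
        stmt6D2r1 (by omega)]
    · subst h
      rw [if_neg (by omega), if_neg (by omega), if_neg (by omega), if_neg (by omega),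
        if_pos (by trivial), stmt6D2r2 (by omega)]
    · rw [if_neg (by omega), if_neg (by omega), if_neg (by omega), if_neg (by omega),
        if_neg (by omega), if_neg (by omega), stmt6Dtail hr h1 h2]
      rcases Nat.even_or_odd a with he | ho
      · have ha2 : a % 2 = 0 := Nat.even_iff.mp he
        have hj : Odd (a - (2*r+3)) := Nat.odd_iff.mpr (by omega)
        rw [hj.neg_one_pow, if_neg (by omega : ¬ a % 2 = 1)]
        by_cases h3 : a ≤ 3*r
        · rw [if_pos (by omega : a - (2*r+3) ≤ r - 3), if_pos h3]; omega
        · rw [if_neg (by omega : ¬ a - (2*r+3) ≤ r - 3), if_neg h3]; omega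
      · have ha2 : a % 2 = 1 := Nat.odd_iff.mp ho
        have hj : Even (a - (2*r+3)) := Nat.even_iff.mpr (by omega)
        rw [hj.neg_one_pow, if_pos ha2]
        by_cases h3 : a ≤ 3*r
        · rw [if_pos (by omega : a - (2*r+3) ≤ r - 3), if_pos h3]; omega
        · rw [if_neg (by omega : ¬ a - (2*r+3) ≤ r - 3), if_neg h3]; omega
    · subst h
      rw [if_neg (by omega), if_neg (by omega), if_neg (by omega), if_neg (by omega),
        if_neg (by omega), if_pos (by trivial), stmt6D4r1 hr]
      push_cast; ring
  -- partial sums agree with stmt6F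
  have key : ∀ a, a ≤ 4*r → ∑ i ∈ Finset.range a, d i = stmt6F r a := by
    intro a
    induction a with
    | zero => intro _; simp [stmt6F]
    | succ n ih =>
        intro h
        rw [Finset.sum_range_succ, ih (by omega), hd' n (by omega),
          stmt6Fstep r hr hro n (by omega)]
  refine ⟨?_, ?_, ?_⟩
  · intro i j hij hj
    rw [hd' i (by omega), hd' j hj, stmt6DnatAbs r hr i (by omega),
      stmt6DnatAbs r hr j hj]
    exact stmt6Ainj r hr i j hij hj
  · rw [key (4*r) le_rfl, stmt6F4r hr]
    push_cast; ring
  · intro a b hab hb h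
    rw [key a (by omega), key b hb] at h
    have hdvd : ((16*r : ℕ) : ℤ) ∣ (stmt6F r b - stmt6F r a) := Int.ModEq.dvd h
    have hne : stmt6F r a ≠ stmt6F r b := stmt6Finj r hr hro a b (by omega) hb hab
    have h1 := stmt6Fbound r hr hro a (by omega)
    have h2 := stmt6Fbound r hr hro b hb
    have hle : ((16*r : ℕ) : ℤ) ≤ |stmt6F r b - stmt6F r a| :=
      Int.le_of_dvd (abs_pos.mpr (sub_ne_zero.mpr (Ne.symm hne)))
        ((dvd_abs _ _).mpr hdvd)
    rcases abs_cases (stmt6F r b - stmt6F r a) with ⟨he, _⟩ | ⟨he, _⟩ <;>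
      (rw [he] at hle; push_cast at hle; omega)
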